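/- Let 0 < ν ≤ 1 and λ > 0. For every natural number n, the function t ↦ p_ν(n,t) := ((-1)^n/n!) Σ_{k=0}^∞ [(-λ^ν t)^k / k!] · Γ(kν+1)/Γ(kν+1-n) is differentiable on (0,∞) and satisfies, for all t > 0, the equation d/dt p_ν(n,t) = -λ^ν · Σ_{r=0}^{n} (-1)^r ((ν)_r / r!) · p_ν(n-r, t), together with the initial conditions p_ν(0,0) = 1 and p_ν(n,0) = 0 for n ≥ 1. -/

import Mathlib

open Real Finset

/-- Falling factorial `(x)_r = x(x-1)⋯(x-r+1)`. -/
noncomputable def fallFac (x : ℝ) (r : ℕ) : ℝ := ∏ i ∈ Finset.range r, (x - i)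

lemma fallFac_zero (x : ℝ) : fallFac x 0 = 1 := by simp [fallFac]

lemma fallFac_succ (x : ℝ) (r : ℕ) : fallFac x (r + 1) = fallFac x r * (x - r) :=
  Finset.prod_range_succ _ _

/-- Vandermonde identity for falling factorials. -/
lemma fallFac_vandermonde (x y : ℝ) (n : ℕ) :
    fallFac (x + y) n
      = ∑ r ∈ Finset.range (n + 1), (n.choose r : ℝ) * fallFac x r * fallFac y (n - r) := by
  induction n with
  | zero => simp [fallFac]
  | succ n ih =>
    have hsplit : ∑ r ∈ Finset.range (n + 2), ((n+1).choose r : ℝ) * fallFac x r * fallFac y (n + 1 - r)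
        = (∑ r ∈ Finset.range (n + 1), (n.choose r : ℝ) * fallFac x r * fallFac y (n + 1 - r))
          + ∑ r ∈ Finset.range (n + 1), (n.choose r : ℝ) * (fallFac x r * (x - r)) * fallFac y (n - r) := by
      rw [Finset.sum_range_succ' (fun r => ((n+1).choose r : ℝ) * fallFac x r * fallFac y (n + 1 - r)) (n+1)]
      have h1 : ∀ r, ((n+1).choose (r+1) : ℝ) = (n.choose r : ℝ) + (n.choose (r+1) : ℝ) := by
        intro r; rw [Nat.choose_succ_succ]; push_cast; ring
      have h2 : ∀ r, fallFac x (r+1) = fallFac x r * (x - r) := fallFac_succ x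
      calc (∑ r ∈ Finset.range (n + 1), ((n+1).choose (r+1) : ℝ) * fallFac x (r+1) * fallFac y (n + 1 - (r+1)))
            + ((n+1).choose 0 : ℝ) * fallFac x 0 * fallFac y (n+1)
          = (∑ r ∈ Finset.range (n + 1), ((n.choose (r+1) : ℝ) * fallFac x (r+1) * fallFac y (n - r)
              + (n.choose r : ℝ) * (fallFac x r * (x - r)) * fallFac y (n - r))) + fallFac y (n+1) := by
            simp only [Nat.choose_zero_right, Nat.cast_one, one_mul, fallFac_zero]
            congr 1
            refine Finset.sum_congr rfl fun r hr => ?_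
            have : n + 1 - (r + 1) = n - r := by omega
            rw [this, h1 r, h2 r]; ring
        _ = ((∑ r ∈ Finset.range (n + 1), (n.choose (r+1) : ℝ) * fallFac x (r+1) * fallFac y (n - r)) + fallFac y (n+1))
            + ∑ r ∈ Finset.range (n + 1), (n.choose r : ℝ) * (fallFac x r * (x - r)) * fallFac y (n - r) := by
            rw [Finset.sum_add_distrib]; ring
        _ = (∑ r ∈ Finset.range (n + 1), (n.choose r : ℝ) * fallFac x r * fallFac y (n + 1 - r))
            + ∑ r ∈ Finset.range (n + 1), (n.choose r : ℝ) * (fallFac x r * (x - r)) * fallFac y (n - r) := by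
            congr 1
            rw [Finset.sum_range_succ' (fun r => (n.choose r : ℝ) * fallFac x r * fallFac y (n + 1 - r)) n]
            have hlast : ∑ r ∈ Finset.range (n + 1), (n.choose (r+1) : ℝ) * fallFac x (r+1) * fallFac y (n - r)
                = ∑ r ∈ Finset.range n, (n.choose (r+1) : ℝ) * fallFac x (r+1) * fallFac y (n - r) := by
              rw [Finset.sum_range_succ, Nat.choose_succ_self]; simp
            rw [hlast]
            simp only [Nat.choose_zero_right, Nat.cast_one, one_mul, fallFac_zero, Nat.sub_zero]
            congr 1
            refine Finset.sum_congr rfl fun r hr => ?_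
            have : n + 1 - (r + 1) = n - r := by omega
            rw [this]
    rw [hsplit, fallFac_succ, ih, Finset.sum_mul, ← Finset.sum_add_distrib]
    refine (Finset.sum_congr rfl fun r hr => ?_).symm
    have hr' : r ≤ n := Nat.lt_succ_iff.mp (Finset.mem_range.mp hr)
    have h3 : fallFac y (n + 1 - r) = fallFac y (n - r) * (y - (n - r : ℕ)) := by
      have : n + 1 - r = (n - r) + 1 := by omega
      rw [this, fallFac_succ]
    have hc : ((n - r : ℕ) : ℝ) = (n : ℝ) - r := by
      push_cast [Nat.cast_sub hr']; ring
    rw [h3, hc]; ring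

lemma Gamma_eq_fallFac_mul (x : ℝ) (n : ℕ) (h : ∀ i : ℕ, i < n → x ≠ i) :
    Real.Gamma (x + 1) = fallFac x n * Real.Gamma (x + 1 - n) := by
  induction n with
  | zero => simp [fallFac]
  | succ n ih =>
    have hxn : x - (n : ℝ) ≠ 0 := by
      have := h n (Nat.lt_succ_self n); intro hc
      exact this (by linarith [sub_eq_zero.mp hc])
    have h1 : x + 1 - (n : ℝ) = (x - n) + 1 := by ring
    have h2 : Real.Gamma (x + 1 - n) = (x - n) * Real.Gamma (x - n) := by
      rw [h1, Real.Gamma_add_one hxn]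
    rw [ih (fun i hi => h i (hi.trans (Nat.lt_succ_self n))), h2, fallFac_succ]
    have h3 : x + 1 - ((n : ℕ) + 1 : ℕ) = x - n := by push_cast; ring
    rw [h3]; ring

lemma gamma_ratio (x : ℝ) (hx : 0 ≤ x) (n : ℕ) :
    Real.Gamma (x + 1) / Real.Gamma (x + 1 - n) = fallFac x n := by
  by_cases h : ∀ i : ℕ, i < n → x ≠ i
  · have hne : Real.Gamma (x + 1 - n) ≠ 0 := by
      apply Real.Gamma_ne_zero
      intro m hm
      have hxval : x = (n : ℝ) - 1 - m := by linarith
      have hn1 : (1 : ℝ) + m ≤ n := by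
        rw [hxval] at hx; linarith
      have hmn : m + 1 ≤ n := by exact_mod_cast (by push_cast; linarith : ((m + 1 : ℕ) : ℝ) ≤ (n : ℕ))
      have hi : n - 1 - m < n := by omega
      refine h (n - 1 - m) hi ?_
      rw [hxval]; push_cast [Nat.cast_sub (by omega : 1 + m ≤ n)]
      have : ((n - 1 - m : ℕ) : ℝ) = (n : ℝ) - 1 - m := by
        push_cast [Nat.cast_sub (by omega : m ≤ n - 1), Nat.cast_sub (by omega : 1 ≤ n)]; ring
      rw [this]
    rw [Gamma_eq_fallFac_mul x n h, mul_div_assoc, div_self hne, mul_one]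
  · push_neg at h
    obtain ⟨i, hi, hxi⟩ := h
    have hz : Real.Gamma (x + 1 - n) = 0 := by
      have : x + 1 - (n : ℝ) = -((n - 1 - i : ℕ) : ℝ) := by
        rw [hxi]
        push_cast [Nat.cast_sub (by omega : i ≤ n - 1), Nat.cast_sub (by omega : 1 ≤ n)]
        ring
      rw [this]; exact Real.Gamma_neg_nat_eq_zero _
    rw [hz, div_zero]
    exact (Finset.prod_eq_zero (Finset.mem_range.mpr hi) (by rw [hxi]; ring)).symm

lemma summable_master (C : ℝ) (hC : 0 ≤ C) (q : ℕ) :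
    Summable (fun k : ℕ => ((k : ℝ) + q) ^ q * C ^ k / k.factorial) := by
  refine Summable.of_nonneg_of_le (fun k => by positivity) (fun k => ?_)
    ((Real.summable_pow_div_factorial (Real.exp 1 * C)).mul_left ((q.factorial : ℝ) * Real.exp q))
  have h1 : ((k : ℝ) + q) ^ q ≤ (q.factorial : ℝ) * Real.exp ((k : ℝ) + q) := by
    have := Real.pow_div_factorial_le_exp (x := (k : ℝ) + q) (by positivity) q
    have hq : (0 : ℝ) < q.factorial := by exact_mod_cast q.factorial_pos
    calc ((k : ℝ) + q) ^ q = (((k : ℝ) + q) ^ q / q.factorial) * q.factorial := by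
          field_simp
      _ ≤ Real.exp ((k : ℝ) + q) * q.factorial := by
          apply mul_le_mul_of_nonneg_right this hq.le
      _ = (q.factorial : ℝ) * Real.exp ((k : ℝ) + q) := by ring
  have h2 : Real.exp ((k : ℝ) + q) = Real.exp 1 ^ k * Real.exp q := by
    rw [Real.exp_add]; congr 1
    rw [← Real.exp_nat_mul]; norm_num
  have hkf : (0 : ℝ) < k.factorial := by exact_mod_cast k.factorial_pos
  rw [div_le_iff₀ hkf, mul_pow]
  calc ((k : ℝ) + q) ^ q * C ^ k ≤ (q.factorial : ℝ) * Real.exp ((k : ℝ) + q) * C ^ k := by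
        apply mul_le_mul_of_nonneg_right h1 (by positivity)
    _ = (q.factorial : ℝ) * Real.exp q * (Real.exp 1 ^ k * C ^ k) := by rw [h2]; ring
    _ = (q.factorial : ℝ) * Real.exp q * (Real.exp 1 ^ k * C ^ k) / ↑k.factorial * ↑k.factorial := by
        field_simp
    _ = (q.factorial : ℝ) * Real.exp q * (Real.exp 1 ^ k * C ^ k / ↑k.factorial) * ↑k.factorial := by
        ring

lemma vandermonde_div (x y : ℝ) (n : ℕ) :
    fallFac (x + y) n / n.factorial
      = ∑ r ∈ Finset.range (n + 1),
          fallFac x r / r.factorial * (fallFac y (n - r) / (n - r).factorial) := by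
  rw [fallFac_vandermonde, Finset.sum_div]
  refine Finset.sum_congr rfl fun r hr => ?_
  have hr' : r ≤ n := Nat.lt_succ_iff.mp (Finset.mem_range.mp hr)
  have hc : (n.choose r : ℝ) * r.factorial * (n - r).factorial = n.factorial := by
    exact_mod_cast congrArg (Nat.cast : ℕ → ℝ) (Nat.choose_mul_factorial_mul_factorial hr')
  have h1 : (0:ℝ) < r.factorial := by exact_mod_cast r.factorial_pos
  have h2 : (0:ℝ) < (n - r).factorial := by exact_mod_cast (n - r).factorial_pos
  have h3 : (0:ℝ) < n.factorial := by exact_mod_cast n.factorial_pos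
  field_simp
  rw [← hc]; ring

noncomputable def sfTerm (ν L : ℝ) (m k : ℕ) : ℝ :=
  (-L) ^ k / k.factorial * fallFac ((k : ℝ) * ν) m

lemma abs_fallFac_le {ν : ℝ} (hν0 : 0 < ν) (hν1 : ν ≤ 1) (k m : ℕ) :
    |fallFac ((k : ℝ) * ν) m| ≤ ((k : ℝ) + m) ^ m := by
  unfold fallFac
  rw [Finset.abs_prod]
  calc ∏ i ∈ Finset.range m, |(k : ℝ) * ν - i|
      ≤ ∏ i ∈ Finset.range m, ((k : ℝ) + m) := by
        refine Finset.prod_le_prod (fun i _ => abs_nonneg _) (fun i hi => ?_)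
        have hi' : (i : ℝ) ≤ m := by
          exact_mod_cast (Finset.mem_range.mp hi).le
        have hk : (0 : ℝ) ≤ k := Nat.cast_nonneg k
        have hkν : (k : ℝ) * ν ≤ k := by nlinarith
        have hkν0 : (0 : ℝ) ≤ (k : ℝ) * ν := by positivity
        rw [abs_le]; constructor <;> nlinarith
    _ = ((k : ℝ) + m) ^ m := by rw [Finset.prod_const, Finset.card_range]

lemma abs_sfTerm_le {ν L : ℝ} (hν0 : 0 < ν) (hν1 : ν ≤ 1) (hL : 0 ≤ L) (m k : ℕ) (t : ℝ) :
    |sfTerm ν L m k * t ^ k| ≤ ((k : ℝ) + m) ^ m * (L * |t|) ^ k / k.factorial := by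
  have h1 : |sfTerm ν L m k * t ^ k|
      = L ^ k * |t| ^ k * |fallFac ((k : ℝ) * ν) m| / k.factorial := by
    unfold sfTerm
    rw [abs_mul, abs_mul, abs_div, abs_pow, abs_pow, abs_neg, abs_of_nonneg hL, Nat.abs_cast]
    ring
  have h2 : ((k : ℝ) + m) ^ m * (L * |t|) ^ k / k.factorial
      = L ^ k * |t| ^ k * ((k : ℝ) + m) ^ m / k.factorial := by
    rw [mul_pow]; ring
  rw [h1, h2]
  gcongr
  exact abs_fallFac_le hν0 hν1 k m

lemma summable_sf {ν L : ℝ} (hν0 : 0 < ν) (hν1 : ν ≤ 1) (hL : 0 ≤ L) (m : ℕ) (t : ℝ) :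
    Summable (fun k : ℕ => sfTerm ν L m k * t ^ k) := by
  refine Summable.of_norm_bounded (summable_master (L * |t|) (by positivity) m) (fun k => ?_)
  rw [Real.norm_eq_abs]
  exact abs_sfTerm_le hν0 hν1 hL m k t

/-- State probabilities of the space fractional Poisson process (SFPP). -/
noncomputable def pSF (ν lam : ℝ) (n : ℕ) (t : ℝ) : ℝ :=
  ((-1) ^ n / n.factorial) * ∑' k : ℕ,
    (-(lam ^ ν) * t) ^ k / k.factorial *
      (Real.Gamma ((k : ℝ) * ν + 1) / Real.Gamma ((k : ℝ) * ν + 1 - n))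

lemma pSF_eq {ν : ℝ} (lam : ℝ) (hν0 : 0 < ν) (m : ℕ) (t : ℝ) :
    pSF ν lam m t = ((-1 : ℝ) ^ m / m.factorial) * ∑' k : ℕ, sfTerm ν (lam ^ ν) m k * t ^ k := by
  unfold pSF sfTerm
  congr 1
  refine tsum_congr fun k => ?_
  rw [gamma_ratio ((k : ℝ) * ν) (by positivity) m, mul_pow]
  ring

theorem sfpp_solves_dde (ν lam : ℝ) (hν0 : 0 < ν) (hν1 : ν ≤ 1) (hlam : 0 < lam)
    (n : ℕ) :
    (∀ t : ℝ, 0 < t →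
      HasDerivAt (fun s => pSF ν lam n s)
        (-(lam ^ ν) * ∑ r ∈ Finset.range (n + 1),
          (-1) ^ r * (fallFac ν r / r.factorial) * pSF ν lam (n - r) t) t) ∧
    pSF ν lam 0 0 = 1 ∧ (∀ n' : ℕ, 1 ≤ n' → pSF ν lam n' 0 = 0) := by
  set L := lam ^ ν with hLdef
  have hL : 0 < L := Real.rpow_pos_of_pos hlam ν
  refine ⟨?_, ?_, ?_⟩
  · intro t ht
    set T := t + 1 with hTdef
    have hT1 : (1 : ℝ) ≤ T := by simp [hTdef]; linarith
    have hT0 : (0 : ℝ) < T := by linarith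
    have htmem : t ∈ Set.Ioo (-T) T := ⟨by simp [hTdef]; linarith, by simp [hTdef]⟩
    have h0mem : (0 : ℝ) ∈ Set.Ioo (-T) T := ⟨by linarith, hT0⟩
    have hu : Summable (fun k : ℕ => ((k : ℝ) + (n + 1 : ℕ)) ^ (n + 1) * (L * T) ^ k / k.factorial) :=
      summable_master (L * T) (by positivity) (n + 1)
    -- derivative bound on the strip
    have hbound : ∀ (k : ℕ), ∀ y ∈ Set.Ioo (-T) T,
        ‖sfTerm ν L n k * ((k : ℝ) * y ^ (k - 1))‖
          ≤ ((k : ℝ) + (n + 1 : ℕ)) ^ (n + 1) * (L * T) ^ k / k.factorial := by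
      intro k y hy
      have hyT : |y| ≤ T := (abs_lt.mpr ⟨hy.1, hy.2⟩).le
      have habs : ‖sfTerm ν L n k * ((k : ℝ) * y ^ (k - 1))‖
          = L ^ k * |fallFac ((k : ℝ) * ν) n| * ((k : ℝ) * |y| ^ (k - 1)) / k.factorial := by
        simp only [Real.norm_eq_abs, sfTerm, abs_mul, abs_div, abs_pow, abs_neg,
          abs_of_nonneg hL.le, Nat.abs_cast]
        ring
      rw [habs]
      have h1 : |fallFac ((k : ℝ) * ν) n| ≤ ((k : ℝ) + (n + 1 : ℕ)) ^ n := by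
        refine (abs_fallFac_le hν0 hν1 k n).trans ?_
        apply pow_le_pow_left₀ (by positivity)
        push_cast; linarith
      have h2 : (k : ℝ) * |y| ^ (k - 1) ≤ ((k : ℝ) + (n + 1 : ℕ)) * T ^ k := by
        have hy1 : |y| ^ (k - 1) ≤ T ^ (k - 1) := pow_le_pow_left₀ (abs_nonneg y) hyT _
        have hy2 : T ^ (k - 1) ≤ T ^ k := pow_le_pow_right₀ hT1 (Nat.sub_le k 1)
        have hk : (k : ℝ) ≤ (k : ℝ) + (n + 1 : ℕ) := by push_cast; linarith
        have := mul_le_mul hk (hy1.trans hy2) (by positivity) (by positivity)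
        exact this
      calc L ^ k * |fallFac ((k : ℝ) * ν) n| * ((k : ℝ) * |y| ^ (k - 1)) / k.factorial
          ≤ L ^ k * (((k : ℝ) + (n + 1 : ℕ)) ^ n) * ((((k : ℝ) + (n + 1 : ℕ))) * T ^ k) / k.factorial := by
            gcongr
        _ = ((k : ℝ) + (n + 1 : ℕ)) ^ (n + 1) * (L * T) ^ k / k.factorial := by
            rw [pow_succ, mul_pow]; ring
    have hg0 : Summable (fun k : ℕ => sfTerm ν L n k * (0 : ℝ) ^ k) :=
      summable_sf hν0 hν1 hL.le n 0
    have hd : HasDerivAt (fun z : ℝ => ∑' k : ℕ, sfTerm ν L n k * z ^ k)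
        (∑' k : ℕ, sfTerm ν L n k * ((k : ℝ) * t ^ (k - 1))) t :=
      hasDerivAt_tsum_of_isPreconnected
        (g := fun (k : ℕ) (z : ℝ) => sfTerm ν L n k * z ^ k)
        (g' := fun (k : ℕ) (z : ℝ) => sfTerm ν L n k * ((k : ℝ) * z ^ (k - 1)))
        hu isOpen_Ioo isPreconnected_Ioo
        (fun k y _ => (hasDerivAt_pow k y).const_mul _) hbound h0mem hg0 htmem
    have hpsf : (fun s => pSF ν lam n s)
        = fun s => ((-1 : ℝ) ^ n / n.factorial) * ∑' k : ℕ, sfTerm ν L n k * s ^ k :=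
      funext fun s => pSF_eq lam hν0 n s
    have hd2 : HasDerivAt (fun s => pSF ν lam n s)
        (((-1 : ℝ) ^ n / n.factorial) * ∑' k : ℕ, sfTerm ν L n k * ((k : ℝ) * t ^ (k - 1))) t := by
      rw [hpsf]; exact hd.const_mul _
    -- identify the derivative with the right-hand side
    have hsum' : Summable (fun k : ℕ => sfTerm ν L n k * ((k : ℝ) * t ^ (k - 1))) :=
      Summable.of_norm_bounded hu (fun k => hbound k t htmem)
    have key : ∀ k : ℕ,
        ∑ r ∈ Finset.range (n + 1),
          (-L * ((-1 : ℝ) ^ r * (fallFac ν r / r.factorial) * (((-1 : ℝ) ^ (n - r) / (n - r).factorial)))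
            * (sfTerm ν L (n - r) k * t ^ k))
        = ((-1 : ℝ) ^ n / n.factorial) * (sfTerm ν L n (k + 1) * (((k : ℝ) + 1) * t ^ k)) := by
      intro k
      have hvd := vandermonde_div ν ((k : ℝ) * ν) n
      have hcast : (((k : ℕ) + 1 : ℕ) : ℝ) * ν = ν + (k : ℝ) * ν := by push_cast; ring
      have hC : ∀ r ∈ Finset.range (n + 1),
          (-L * ((-1 : ℝ) ^ r * (fallFac ν r / r.factorial) * (((-1 : ℝ) ^ (n - r) / (n - r).factorial)))
            * (sfTerm ν L (n - r) k * t ^ k))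
          = (-L * (-1 : ℝ) ^ n * ((-L) ^ k * t ^ k / k.factorial))
            * (fallFac ν r / r.factorial * (fallFac ((k : ℝ) * ν) (n - r) / (n - r).factorial)) := by
        intro r hr
        have hr' : r ≤ n := Nat.lt_succ_iff.mp (Finset.mem_range.mp hr)
        have hsgn : (-1 : ℝ) ^ r * (-1 : ℝ) ^ (n - r) = (-1 : ℝ) ^ n := by
          rw [← pow_add]; congr 1; omega
        have hre : -L * ((-1 : ℝ) ^ r * (fallFac ν r / r.factorial) * (((-1 : ℝ) ^ (n - r) / (n - r).factorial)))
            * (sfTerm ν L (n - r) k * t ^ k)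
            = ((-1 : ℝ) ^ r * (-1 : ℝ) ^ (n - r)) * (-L * ((-L) ^ k * t ^ k / k.factorial))
              * (fallFac ν r / r.factorial * (fallFac ((k : ℝ) * ν) (n - r) / (n - r).factorial)) := by
          unfold sfTerm; ring
        rw [hre, hsgn]; ring
      rw [Finset.sum_congr rfl hC, ← Finset.mul_sum, ← hvd]
      unfold sfTerm
      rw [hcast]
      have hkf : ((k + 1 : ℕ).factorial : ℝ) = ((k : ℝ) + 1) * k.factorial := by
        rw [Nat.factorial_succ]; push_cast; ring
      rw [pow_succ, hkf]
      have hf1 : (0 : ℝ) < k.factorial := by exact_mod_cast k.factorial_pos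
      have hf2 : (0 : ℝ) < n.factorial := by exact_mod_cast n.factorial_pos
      field_simp
    have hswap :
        -(L) * ∑ r ∈ Finset.range (n + 1),
          (-1 : ℝ) ^ r * (fallFac ν r / r.factorial) * pSF ν lam (n - r) t
        = ((-1 : ℝ) ^ n / n.factorial) * ∑' k : ℕ, sfTerm ν L n k * ((k : ℝ) * t ^ (k - 1)) := by
      have hstep1 : ∀ r ∈ Finset.range (n + 1),
          -L * ((-1 : ℝ) ^ r * (fallFac ν r / r.factorial) * pSF ν lam (n - r) t)
          = ∑' k : ℕ,
              (-L * ((-1 : ℝ) ^ r * (fallFac ν r / r.factorial) * (((-1 : ℝ) ^ (n - r) / (n - r).factorial)))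
                * (sfTerm ν L (n - r) k * t ^ k)) := by
        intro r hr
        rw [pSF_eq lam hν0 (n - r) t, ← hLdef, ← tsum_mul_left, ← tsum_mul_left,
          ← tsum_mul_left]
        exact tsum_congr fun k => by ring
      calc -(L) * ∑ r ∈ Finset.range (n + 1),
              (-1 : ℝ) ^ r * (fallFac ν r / r.factorial) * pSF ν lam (n - r) t
          = ∑ r ∈ Finset.range (n + 1),
              -L * ((-1 : ℝ) ^ r * (fallFac ν r / r.factorial) * pSF ν lam (n - r) t) := by
            rw [Finset.mul_sum]
        _ = ∑ r ∈ Finset.range (n + 1), ∑' k : ℕ,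
              (-L * ((-1 : ℝ) ^ r * (fallFac ν r / r.factorial) * (((-1 : ℝ) ^ (n - r) / (n - r).factorial)))
                * (sfTerm ν L (n - r) k * t ^ k)) := Finset.sum_congr rfl hstep1
        _ = ∑' k : ℕ, ∑ r ∈ Finset.range (n + 1),
              (-L * ((-1 : ℝ) ^ r * (fallFac ν r / r.factorial) * (((-1 : ℝ) ^ (n - r) / (n - r).factorial)))
                * (sfTerm ν L (n - r) k * t ^ k)) := by
            refine (Summable.tsum_finsetSum fun r hr => ?_).symm
            exact (summable_sf hν0 hν1 hL.le (n - r) t).mul_left _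
        _ = ∑' k : ℕ, ((-1 : ℝ) ^ n / n.factorial) * (sfTerm ν L n (k + 1) * (((k : ℝ) + 1) * t ^ k)) :=
            tsum_congr key
        _ = ((-1 : ℝ) ^ n / n.factorial) * ∑' k : ℕ, sfTerm ν L n (k + 1) * (((k : ℝ) + 1) * t ^ k) :=
            tsum_mul_left
        _ = ((-1 : ℝ) ^ n / n.factorial) * ∑' k : ℕ, sfTerm ν L n k * ((k : ℝ) * t ^ (k - 1)) := by
            congr 1
            rw [Summable.tsum_eq_zero_add hsum']
            simp only [Nat.cast_zero, zero_mul, mul_zero, zero_add]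
            refine tsum_congr fun k => ?_
            push_cast [Nat.add_sub_cancel]
            ring
    rw [hswap]
    exact hd2
  · unfold pSF
    rw [tsum_eq_single 0 (fun k hk => by
      rw [mul_zero, zero_pow hk, zero_div, zero_mul])]
    simp [Real.Gamma_one]
  · intro n' hn'
    unfold pSF
    rw [tsum_eq_single 0 (fun k hk => by
      rw [mul_zero, zero_pow hk, zero_div, zero_mul])]
    have h1 : (0 : ℝ) * ν + 1 - (n' : ℝ) = -(((n' - 1 : ℕ) : ℝ)) := by
      push_cast [Nat.cast_sub hn']; ring
    rw [Nat.cast_zero, h1, Real.Gamma_neg_nat_eq_zero, div_zero, mul_zero, mul_zero]
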